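/- arXiv:1306.2862 — 12 statements merged into one kernel-verified Lean document; each statement's English description precedes it below -/
import Mathlib

section
/- Let S be a numerical semigroup with conductor c and genus g. If m ≥ 2c − 1, then the number of divisors of m in S is m + 1 − 2g, i.e., #(S ∩ (m − S)) = m + 1 − 2g. -/
/-- A numerical semigroup: a cofinite submonoid of ℕ, viewed inside ℤ. -/
def IsNumSgp (S : Set ℤ) : Prop :=
  0 ∈ S ∧ (∀ x ∈ S, 0 ≤ x) ∧ (∀ x ∈ S, ∀ y ∈ S, x + y ∈ S) ∧
    {x : ℤ | 0 ≤ x ∧ x ∉ S}.Finite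

/-- `c` is the conductor of `S`: least integer with `c + ℕ ⊆ S`. -/
def IsConductor (S : Set ℤ) (c : ℤ) : Prop :=
  (∀ n, c ≤ n → n ∈ S) ∧ ∀ c', (∀ n, c' ≤ n → n ∈ S) → c ≤ c'

/-- Set of divisors of `x` in `S`: `D(x) = {s ∈ S | x - s ∈ S}`. -/
def divs (S : Set ℤ) (x : ℤ) : Set ℤ := {s | s ∈ S ∧ x - s ∈ S}

/-- Genus: number of gaps. -/
noncomputable def genus (S : Set ℤ) : ℕ := {x : ℤ | 0 ≤ x ∧ x ∉ S}.ncard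

/-- Apéry set of `S` with respect to the integer `n`. -/
def Ap (S : Set ℤ) (n : ℤ) : Set ℤ := {s | s ∈ S ∧ s - n ∉ S}

/-- The numerical semigroup generated by `a` and `b`. -/
def gen2 (a b : ℤ) : Set ℤ := {n | ∃ x y : ℕ, n = (x : ℤ) * a + (y : ℤ) * b}

theorem stmt_1 (S : Set ℤ) (hS : IsNumSgp S) (c : ℤ) (hc : IsConductor S c)
    (m : ℤ) (hm : 2 * c - 1 ≤ m) :
    ((divs S m).ncard : ℤ) = m + 1 - 2 * (genus S : ℤ) := by
  obtain ⟨h0, hpos, hadd, hfin⟩ := hS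
  obtain ⟨hc1, _⟩ := hc
  have hc0 : 0 ≤ c := by
    by_contra h
    push_neg at h
    have := hpos (-1) (hc1 (-1) (by omega))
    omega
  set G : Set ℤ := {x : ℤ | 0 ≤ x ∧ x ∉ S} with hG
  have hgap : ∀ x ∈ G, x < c := by
    intro x hx
    by_contra h
    push_neg at h
    exact hx.2 (hc1 x h)
  have hGfin : G.Finite := hfin
  set G' : Set ℤ := (fun x => m - x) '' G with hG'
  have hG'fin : G'.Finite := hGfin.image _
  have hG'card : G'.ncard = G.ncard := by
    apply Set.ncard_image_of_injective
    intro a b hab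
    have : m - a = m - b := hab
    omega
  have hDsub : divs S m ⊆ Set.Icc 0 m := by
    rintro s ⟨hs1, hs2⟩
    have h1 := hpos s hs1
    have h2 := hpos _ hs2
    exact ⟨h1, by omega⟩
  have hDfin : (divs S m).Finite := (Set.finite_Icc 0 m).subset hDsub
  have hunion : Set.Icc 0 m = divs S m ∪ G ∪ G' := by
    ext s
    simp only [Set.mem_Icc, Set.mem_union, hG', Set.mem_image, hG, Set.mem_setOf_eq,
      divs, Set.mem_setOf_eq]
    constructor
    · rintro ⟨h1, h2⟩
      by_cases hs : s ∈ S
      · by_cases hms : m - s ∈ S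
        · exact Or.inl (Or.inl ⟨hs, hms⟩)
        · exact Or.inr ⟨m - s, ⟨by omega, hms⟩, by ring⟩
      · exact Or.inl (Or.inr ⟨h1, hs⟩)
    · rintro ((⟨hs1, hs2⟩ | ⟨hx1, hx2⟩) | ⟨x, ⟨hx1, hx2⟩, rfl⟩)
      · have := hpos s hs1
        have := hpos _ hs2
        omega
      · have := hgap s ⟨hx1, hx2⟩
        omega
      · have := hgap x ⟨hx1, hx2⟩
        omega
  have hd1 : Disjoint (divs S m) G := by
    rw [Set.disjoint_left]
    rintro s ⟨hs1, _⟩ ⟨_, hs3⟩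
    exact hs3 hs1
  have hd2 : Disjoint (divs S m ∪ G) G' := by
    rw [Set.disjoint_left]
    rintro s hs ⟨x, ⟨hx1, hx2⟩, rfl⟩
    have hxc := hgap x ⟨hx1, hx2⟩
    rcases hs with ⟨_, hs2⟩ | ⟨hs1, hs2⟩
    · exact hx2 (by simpa using hs2)
    · have hmx : (0:ℤ) ≤ m - x := by omega
      have : m - x < c := hgap _ ⟨hmx, hs2⟩
      omega
  have hcard : (Set.Icc (0:ℤ) m).ncard = (divs S m).ncard + G.ncard + G'.ncard := by
    rw [hunion, Set.ncard_union_eq hd2 ((hDfin.union hGfin)) hG'fin,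
      Set.ncard_union_eq hd1 hDfin hGfin]
  have hIcc : (Set.Icc (0:ℤ) m).ncard = (m + 1).toNat := by
    rw [← Finset.coe_Icc, Set.ncard_coe_finset, Int.card_Icc]
    congr 1
    omega
  have hgen : genus S = G.ncard := rfl
  have hm1 : 0 ≤ m + 1 := by omega
  rw [hgen]
  rw [hIcc, hG'card] at hcard
  have : ((m + 1).toNat : ℤ) = m + 1 := Int.toNat_of_nonneg hm1
  omega
end

section
/- Let a < b be coprime positive integers, S = ⟨a,b⟩, and n a positive integer written as n = ua + vb with 0 ≤ u < b. If −a ≤ v < 0, then Ap(S,n) = {αa + βb : 0 ≤ α < u and 0 ≤ β < a + v}. -/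
lemma mem_gen2_of_nonneg {a b x y : ℤ} (hx : 0 ≤ x) (hy : 0 ≤ y) :
    x * a + y * b ∈ gen2 a b :=
  ⟨x.toNat, y.toNat, by rw [Int.toNat_of_nonneg hx, Int.toNat_of_nonneg hy]⟩

lemma gen2_canon {a b : ℤ} (ha : 0 < a) (hb : 0 < b) (hcop : IsCoprime a b)
    {x y : ℤ} (hx0 : 0 ≤ x) (hxb : x < b) :
    x * a + y * b ∈ gen2 a b ↔ 0 ≤ y := by
  constructor
  · rintro ⟨p, q, heq⟩
    have hd : b ∣ (x - p) := by
      have : b ∣ (x - p) * a := ⟨q - y, by ring_nf; linarith [heq]⟩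
      exact (IsCoprime.dvd_of_dvd_mul_right hcop.symm this)
    obtain ⟨m, hm⟩ := hd
    have hp : (0:ℤ) ≤ p := Int.natCast_nonneg p
    have hm0 : m ≤ 0 := by nlinarith
    have hqy : q - y = m * a := by
      have h1 : (x - p) * a = (q - y) * b := by linarith [heq]
      rw [hm] at h1
      have : (q - y) * b = (m * a) * b := by linarith [h1]
      exact mul_right_cancel₀ (ne_of_gt hb) this
    have hq : (0:ℤ) ≤ q := Int.natCast_nonneg q
    nlinarith
  · intro hy
    exact mem_gen2_of_nonneg hx0 hy

theorem stmt_5 (a b : ℤ) (ha : 0 < a) (hab : a < b) (hcop : IsCoprime a b)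
    (n u v : ℤ) (hn : 0 < n) (hnuv : n = u * a + v * b)
    (hu0 : 0 ≤ u) (hub : u < b) (hv1 : -a ≤ v) (hv2 : v < 0) :
    Ap (gen2 a b) n =
      {s : ℤ | ∃ α β : ℤ, 0 ≤ α ∧ α < u ∧ 0 ≤ β ∧ β < a + v ∧ s = α * a + β * b} := by
  have hb : (0:ℤ) < b := lt_trans ha hab
  ext s
  constructor
  · rintro ⟨hs, hsn⟩
    obtain ⟨p, q, heq⟩ := hs
    set x : ℤ := (p : ℤ) % b with hxdef
    set y : ℤ := (q : ℤ) + ((p : ℤ) / b) * a with hydef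
    have hx0 : 0 ≤ x := Int.emod_nonneg _ (ne_of_gt hb)
    have hxb : x < b := Int.emod_lt_of_pos _ hb
    have hy0 : 0 ≤ y := by
      have := Int.ediv_nonneg (Int.natCast_nonneg p) (le_of_lt hb)
      positivity
    have hs_eq : s = x * a + y * b := by
      have hp : (p : ℤ) = b * ((p:ℤ) / b) + (p:ℤ) % b := (Int.mul_ediv_add_emod _ _).symm
      rw [heq, hydef, hxdef]; nlinarith [hp]
    by_cases hxu : u ≤ x
    · exfalso
      apply hsn
      have : s - n = (x - u) * a + (y - v) * b := by rw [hs_eq, hnuv]; ring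
      rw [this]
      exact mem_gen2_of_nonneg (by linarith) (by linarith)
    · push_neg at hxu
      refine ⟨x, y, hx0, hxu, hy0, ?_, hs_eq⟩
      by_contra hcon
      push_neg at hcon
      apply hsn
      have : s - n = (x - u + b) * a + (y - v - a) * b := by rw [hs_eq, hnuv]; ring
      rw [this]
      exact mem_gen2_of_nonneg (by linarith) (by linarith)
  · rintro ⟨α, β, hα0, hαu, hβ0, hβ, rfl⟩
    refine ⟨mem_gen2_of_nonneg hα0 hβ0, ?_⟩
    have heq : α * a + β * b - n = (α - u + b) * a + (β - v - a) * b := by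
      rw [hnuv]; ring
    rw [heq, gen2_canon ha hb hcop (by linarith) (by linarith)]
    linarith
end

section
/- Let a < b be coprime positive integers, S = ⟨a,b⟩, and n ∈ S written as n = ua + vb with 0 ≤ u < b (so v ≥ 0). Then Ap(S,n) = {αa + βb : u ≤ α < b, 0 ≤ β < v} ∪ {αa + βb : 0 ≤ α < u, 0 ≤ β < a + v}. -/
lemma mem_gen2_iff (a b : ℤ) (ha : 0 < a) (hab : a < b) (hcop : IsCoprime a b)
    (s α β : ℤ) (hα0 : 0 ≤ α) (hαb : α < b) (hs : s = α * a + β * b) :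
    s ∈ gen2 a b ↔ 0 ≤ β := by
  constructor
  · rintro ⟨x, y, hxy⟩
    have hb0 : (0:ℤ) < b := ha.trans hab
    have hdvd : b ∣ ((x:ℤ) - α) * a := by
      refine ⟨β - (y:ℤ), ?_⟩
      have : (x:ℤ) * a + y * b = α * a + β * b := by rw [← hxy, ← hs]
      ring_nf
      nlinarith [this]
    have hba : IsCoprime b a := hcop.symm
    obtain ⟨k, hk⟩ := hba.dvd_of_dvd_mul_right hdvd
    have hk0 : 0 ≤ k := by nlinarith [Int.natCast_nonneg x]
    have heq : β = (y:ℤ) + k * a := by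
      have h1 : (x:ℤ) * a + y * b = α * a + β * b := by rw [← hxy, ← hs]
      have : b * (k * a) = b * (β - y) := by nlinarith [hk]
      have := mul_left_cancel₀ (ne_of_gt hb0) this
      linarith
    have : 0 ≤ k * a := mul_nonneg hk0 ha.le
    have := Int.natCast_nonneg y
    linarith [heq]
  · intro hβ
    exact ⟨α.toNat, β.toNat, by rw [Int.toNat_of_nonneg hα0, Int.toNat_of_nonneg hβ]; exact hs⟩

theorem stmt_6 (a b : ℤ) (ha : 0 < a) (hab : a < b) (hcop : IsCoprime a b)
    (n u v : ℤ) (hnS : n ∈ gen2 a b) (hnuv : n = u * a + v * b)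
    (hu0 : 0 ≤ u) (hub : u < b) (hv : 0 ≤ v) :
    Ap (gen2 a b) n =
      {s : ℤ | ∃ α β : ℤ, u ≤ α ∧ α < b ∧ 0 ≤ β ∧ β < v ∧ s = α * a + β * b} ∪
      {s : ℤ | ∃ α β : ℤ, 0 ≤ α ∧ α < u ∧ 0 ≤ β ∧ β < a + v ∧ s = α * a + β * b} := by
  have hb0 : (0:ℤ) < b := ha.trans hab
  ext s
  constructor
  · rintro ⟨hsS, hsn⟩
    obtain ⟨x, y, hxy⟩ := hsS
    -- canonical representation
    set α : ℤ := (x : ℤ) % b with hα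
    set β : ℤ := (y : ℤ) + ((x : ℤ) / b) * a with hβ
    have hα0 : 0 ≤ α := Int.emod_nonneg _ (ne_of_gt hb0)
    have hαb : α < b := Int.emod_lt_of_pos _ hb0
    have hβ0 : 0 ≤ β := by
      have : 0 ≤ (x:ℤ) / b := Int.ediv_nonneg (Int.natCast_nonneg x) hb0.le
      have := mul_nonneg this ha.le
      have := Int.natCast_nonneg y
      linarith
    have hsrep : s = α * a + β * b := by
      have hd : (x : ℤ) = b * ((x:ℤ) / b) + (x:ℤ) % b := (Int.mul_ediv_add_emod _ _).symm
      rw [hxy]; rw [hα, hβ]; nlinarith [hd]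
    rcases le_or_gt u α with hcase | hcase
    · left
      refine ⟨α, β, hcase, hαb, hβ0, ?_, hsrep⟩
      by_contra hβv
      push_neg at hβv
      exact hsn ((mem_gen2_iff a b ha hab hcop (s - n) (α - u) (β - v)
        (by linarith) (by linarith) (by rw [hsrep, hnuv]; ring)).mpr (by linarith))
    · right
      refine ⟨α, β, hα0, hcase, hβ0, ?_, hsrep⟩
      by_contra hβv
      push_neg at hβv
      exact hsn ((mem_gen2_iff a b ha hab hcop (s - n) (α - u + b) (β - v - a)
        (by linarith) (by linarith) (by rw [hsrep, hnuv]; ring)).mpr (by linarith))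
  · rintro (⟨α, β, h1, h2, h3, h4, h5⟩ | ⟨α, β, h1, h2, h3, h4, h5⟩)
    · refine ⟨(mem_gen2_iff a b ha hab hcop s α β (by linarith) h2 h5).mpr h3, ?_⟩
      intro hmem
      have := (mem_gen2_iff a b ha hab hcop (s - n) (α - u) (β - v)
        (by linarith) (by linarith) (by rw [h5, hnuv]; ring)).mp hmem
      linarith
    · refine ⟨(mem_gen2_iff a b ha hab hcop s α β h1 (by linarith) h5).mpr h3, ?_⟩
      intro hmem
      have := (mem_gen2_iff a b ha hab hcop (s - n) (α - u + b) (β - v - a)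
        (by linarith) (by linarith) (by rw [h5, hnuv]; ring)).mp hmem
      linarith
end

section
/- Let a < b be coprime positive integers, S = ⟨a,b⟩, and n an integer written as n = ua + vb with 0 ≤ u < b. Then the cardinality of Ap(S,n) is 0 if v < −a, is u(a+v) if −a ≤ v < 0, and is n if v ≥ 0. -/
section
variable {a b : ℤ}

lemma mem_gen2 (x y : ℤ) (hx : 0 ≤ x) (hy : 0 ≤ y) :
    x * a + y * b ∈ gen2 a b :=
  ⟨x.toNat, y.toNat, by rw [Int.toNat_of_nonneg hx, Int.toNat_of_nonneg hy]⟩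

lemma canon_uniq (ha : 0 < a) (hcop : IsCoprime a b)
    {x1 y1 x2 y2 : ℤ} (h : x1 * a + y1 * b = x2 * a + y2 * b)
    (hy1 : 0 ≤ y1) (hy1a : y1 < a) (hy2 : 0 ≤ y2) (hy2a : y2 < a) :
    x1 = x2 ∧ y1 = y2 := by
  have hdvd : a ∣ (y2 - y1) * b := ⟨x1 - x2, by linarith [h]⟩
  have h2 : a ∣ y2 - y1 := hcop.dvd_of_dvd_mul_right hdvd
  have h3 : y2 - y1 = 0 := Int.eq_zero_of_abs_lt_dvd h2 (abs_sub_lt_iff.2 ⟨by linarith, by linarith⟩)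
  constructor
  · have : y1 = y2 := by linarith
    subst this
    have := mul_right_cancel₀ ha.ne' (show x1 * a = x2 * a by linarith)
    exact this
  · linarith

lemma canon_ex (ha : 0 < a) (hcop : IsCoprime a b) (z : ℤ) :
    ∃ x y : ℤ, z = x * a + y * b ∧ 0 ≤ y ∧ y < a := by
  obtain ⟨p, q, hpq⟩ := hcop
  set y := (z * q) % a with hy
  have hdvd : a ∣ z - y * b := by
    refine ⟨z * p + (z * q / a) * b, ?_⟩
    have := Int.emod_def (z * q) a
    rw [hy, this]
    linear_combination (-z) * hpq
  refine ⟨(z - y * b) / a, y, ?_, Int.emod_nonneg _ ha.ne', Int.emod_lt_of_pos _ ha⟩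
  rw [Int.ediv_mul_cancel hdvd]; ring

lemma mem_iff_canon (ha : 0 < a) (hb : 0 < b) (hcop : IsCoprime a b) {x y z : ℤ}
    (hz : z = x * a + y * b) (hy : 0 ≤ y) (hya : y < a) :
    z ∈ gen2 a b ↔ 0 ≤ x := by
  constructor
  · rintro ⟨m, k, hmk⟩
    have hk : (0:ℤ) ≤ (k:ℤ) := Int.natCast_nonneg k
    have hdiv : (0:ℤ) ≤ (k:ℤ) / a := Int.ediv_nonneg hk ha.le
    have heq : ((m:ℤ) + ((k:ℤ) / a) * b) * a + ((k:ℤ) % a) * b = x * a + y * b := by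
      have h1 := Int.mul_ediv_add_emod (k:ℤ) a
      rw [← hz, hmk]; linear_combination b * h1
    have := canon_uniq ha hcop heq (Int.emod_nonneg _ ha.ne') (Int.emod_lt_of_pos _ ha) hy hya
    have hx : x = (m:ℤ) + ((k:ℤ) / a) * b := this.1.symm
    rw [hx]
    have : (0:ℤ) ≤ (m:ℤ) := Int.natCast_nonneg m
    nlinarith
  · intro hx; rw [hz]; exact mem_gen2 x y hx hy

lemma gen2_nonneg (ha : 0 < a) (hb : 0 < b) {z : ℤ} (hz : z ∈ gen2 a b) : 0 ≤ z := by
  obtain ⟨x, y, rfl⟩ := hz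
  positivity

lemma gen2_add {s t : ℤ} (hs : s ∈ gen2 a b) (ht : t ∈ gen2 a b) : s + t ∈ gen2 a b := by
  obtain ⟨x1, y1, rfl⟩ := hs; obtain ⟨x2, y2, rfl⟩ := ht
  exact ⟨x1 + x2, y1 + y2, by push_cast; ring⟩

lemma gen2_large (ha : 0 < a) (hb : 0 < b) (hcop : IsCoprime a b) {z : ℤ}
    (hz : a * b ≤ z) : z ∈ gen2 a b := by
  obtain ⟨x, y, hxy, hy0, hya⟩ := canon_ex ha hcop z
  rw [mem_iff_canon ha hb hcop hxy hy0 hya]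
  nlinarith

end
theorem stmt_7 (a b : ℤ) (ha : 0 < a) (hab : a < b) (hcop : IsCoprime a b)
    (n u v : ℤ) (hnuv : n = u * a + v * b) (hu0 : 0 ≤ u) (hub : u < b) :
    (v < -a → (Ap (gen2 a b) n).ncard = 0) ∧
    (-a ≤ v → v < 0 → ((Ap (gen2 a b) n).ncard : ℤ) = u * (a + v)) ∧
    (0 ≤ v → ((Ap (gen2 a b) n).ncard : ℤ) = n) := by
  have hb : (0:ℤ) < b := lt_trans ha hab
  refine ⟨?_, ?_, ?_⟩
  · -- v < -a : Apéry set empty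
    intro hv
    have hAp : Ap (gen2 a b) n = ∅ := by
      ext s
      simp only [Ap, Set.mem_setOf_eq, Set.mem_empty_iff_false, iff_false, not_and, not_not]
      intro hs
      obtain ⟨x, y, hxy, hy0, hya⟩ := canon_ex ha hcop s
      have hx : 0 ≤ x := (mem_iff_canon ha hb hcop hxy hy0 hya).mp hs
      have heq : s - n = (x - u + b) * a + (y - v - a) * b := by rw [hxy, hnuv]; ring
      rw [heq]
      exact mem_gen2 _ _ (by linarith) (by linarith)
    rw [hAp, Set.ncard_empty]
  · -- -a ≤ v < 0
    intro hva hv0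
    have hav : (0:ℤ) ≤ a + v := by linarith
    set F := (Finset.Ico (0:ℤ) u ×ˢ Finset.Ico (0:ℤ) (a + v)).image
        (fun p : ℤ × ℤ => p.1 * a + p.2 * b) with hF
    have hAp : Ap (gen2 a b) n = ↑F := by
      ext s
      simp only [Ap, Set.mem_setOf_eq, hF, Finset.coe_image, Set.mem_image, Finset.mem_coe,
        Finset.mem_product, Finset.mem_Ico]
      constructor
      · rintro ⟨hs, hsn⟩
        obtain ⟨x, y, hxy, hy0, hya⟩ := canon_ex ha hcop s
        have hx : 0 ≤ x := (mem_iff_canon ha hb hcop hxy hy0 hya).mp hs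
        have hyav : y < a + v := by
          by_contra hge
          push_neg at hge
          refine hsn ?_
          have heq : s - n = (x - u + b) * a + (y - v - a) * b := by rw [hxy, hnuv]; ring
          rw [heq]
          exact mem_gen2 _ _ (by linarith) (by linarith)
        have hxu : x < u := by
          by_contra hge
          push_neg at hge
          refine hsn ?_
          have heq : s - n = (x - u) * a + (y - v) * b := by rw [hxy, hnuv]; ring
          rw [heq]
          exact mem_gen2 _ _ (by linarith) (by linarith)
        exact ⟨(x, y), ⟨⟨hx, hxu⟩, ⟨hy0, hyav⟩⟩, hxy.symm⟩
      · rintro ⟨⟨x, y⟩, ⟨⟨hx0, hxu⟩, ⟨hy0, hyav⟩⟩, rfl⟩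
        refine ⟨mem_gen2 _ _ hx0 hy0, ?_⟩
        intro hmem
        have heq : x * a + y * b - n = (x - u) * a + (y - v) * b := by rw [hnuv]; ring
        have := (mem_iff_canon ha hb hcop heq (by linarith) (by linarith)).mp hmem
        linarith
    have hinj : Set.InjOn (fun p : ℤ × ℤ => p.1 * a + p.2 * b)
        ↑(Finset.Ico (0:ℤ) u ×ˢ Finset.Ico (0:ℤ) (a + v)) := by
      rintro ⟨x1, y1⟩ hp ⟨x2, y2⟩ hq h
      simp only [Finset.coe_product, Set.mem_prod, Finset.mem_coe, Finset.mem_Ico] at hp hq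
      simp only at h
      have := canon_uniq ha hcop h hp.2.1 (by linarith [hp.2.2]) hq.2.1 (by linarith [hq.2.2])
      simp [Prod.ext_iff, this.1, this.2]
    rw [hAp, Set.ncard_coe_finset, hF, Finset.card_image_of_injOn hinj, Finset.card_product,
      Int.card_Ico, Int.card_Ico]
    push_cast [Int.toNat_of_nonneg (by linarith : (0:ℤ) ≤ u - 0),
      Int.toNat_of_nonneg (by linarith : (0:ℤ) ≤ a + v - 0)]
    ring
  · -- 0 ≤ v
    intro hv
    have hn0 : 0 ≤ n := by nlinarith
    rcases hn0.lt_or_eq with hn | hn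
    · -- n > 0 : residue classes mod n
      have hnS : n ∈ gen2 a b := by rw [hnuv]; exact mem_gen2 _ _ hu0 hv
      have hmulS : ∀ k : ℤ, 0 ≤ k → k * n ∈ gen2 a b := by
        intro k hk
        have : k * n = (k * u) * a + (k * v) * b := by rw [hnuv]; ring
        rw [this]
        exact mem_gen2 _ _ (mul_nonneg hk hu0) (mul_nonneg hk hv)
      have hbij : Set.BijOn (fun s => s % n) (Ap (gen2 a b) n) (Set.Ico 0 n) := by
        refine ⟨?_, ?_, ?_⟩
        · intro s _
          exact ⟨Int.emod_nonneg _ hn.ne', Int.emod_lt_of_pos _ hn⟩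
        · -- injective
          intro s hs t ht hst
          simp only at hst
          have hdvd : n ∣ t - s := by
            have : (t - s) % n = 0 := by rw [Int.sub_emod, hst, sub_self, Int.zero_emod]
            exact Int.dvd_of_emod_eq_zero this
          obtain ⟨k, hk⟩ := hdvd
          by_contra hne
          rcases lt_trichotomy s t with h | h | h
          · have hk1 : 1 ≤ k := by nlinarith
            have : t - n = s + (k - 1) * n := by linarith [hk]
            exact ht.2 (this ▸ gen2_add hs.1 (hmulS _ (by linarith)))
          · exact hne h
          · have hk1 : k ≤ -1 := by nlinarith
            have : s - n = t + (-k - 1) * n := by rw [show s = t - n*k from by linarith]; ring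
            exact hs.2 (this ▸ gen2_add ht.1 (hmulS _ (by linarith)))
        · -- surjective
          rintro r ⟨hr0, hrn⟩
          have Hinh : ∃ z : ℤ, z ∈ gen2 a b ∧ z % n = r := by
            refine ⟨r + (a * b) * n, ?_, ?_⟩
            · refine gen2_large ha hb hcop ?_
              have h2 : a * b * 1 ≤ a * b * n := by
                have : (0:ℤ) < a * b := mul_pos ha hb
                exact mul_le_mul_of_nonneg_left hn (le_of_lt this)
              linarith
            · rw [Int.add_mul_emod_self_right]
              exact Int.emod_eq_of_lt hr0 hrn
          have Hbdd : ∃ c : ℤ, ∀ z : ℤ, z ∈ gen2 a b ∧ z % n = r → c ≤ z :=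
            ⟨0, fun z hz => gen2_nonneg ha hb hz.1⟩
          obtain ⟨m, ⟨hmS, hmr⟩, hmin⟩ := Int.exists_least_of_bdd Hbdd Hinh
          refine ⟨m, ⟨hmS, ?_⟩, hmr⟩
          intro hmn
          have hmod : (m - n) % n = r := by rw [Int.sub_emod_right]; exact hmr
          have := hmin (m - n) ⟨hmn, hmod⟩
          linarith
      have h1 : ((fun s => s % n) '' (Ap (gen2 a b) n)).ncard = (Ap (gen2 a b) n).ncard :=
        Set.ncard_image_of_injOn hbij.injOn
      rw [hbij.image_eq] at h1
      rw [← h1, ← Finset.coe_Ico, Set.ncard_coe_finset, Int.card_Ico]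
      rw [Int.toNat_of_nonneg (by linarith)]
      ring
    · -- n = 0
      have hAp : Ap (gen2 a b) n = ∅ := by
        ext s
        simp only [Ap, Set.mem_setOf_eq, Set.mem_empty_iff_false, iff_false, not_and, not_not]
        intro hs
        rw [← hn, sub_zero]
        exact hs
      rw [hAp, Set.ncard_empty, ← hn]
      rfl
end

section
/- Let S be a numerical semigroup, n a positive integer, and m any integer with m ≥ 2c − 1 where c is the conductor of S. Then the map f(s) = m + n − s is a bijection from Ap(S,n) onto D(m+n) \ D(m). -/
theorem stmt_8 (S : Set ℤ) (hS : IsNumSgp S) (c : ℤ) (hc : IsConductor S c)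
    (n : ℤ) (hn : 0 < n) (m : ℤ) (hm : 2 * c - 1 ≤ m) :
    Set.BijOn (fun s => m + n - s) (Ap S n) (divs S (m + n) \ divs S m) := by
  obtain ⟨hcS, -⟩ := hc
  refine ⟨?_, ?_, ?_⟩
  · rintro s ⟨hsS, hsn⟩
    have hslt : s - n < c := by
      by_contra h
      exact hsn (hcS _ (le_of_not_gt h))
    have hmem : m + n - s ∈ S := hcS _ (by linarith)
    refine ⟨⟨hmem, by simpa using hsS⟩, fun hd => ?_⟩
    exact hsn (by have := hd.2; simpa [show m - (m + n - s) = s - n by ring] using this)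
  · intro a _ b _ hab
    simpa using hab
  · rintro t ⟨⟨htS, htm⟩, htnot⟩
    have hmt : m - t ∉ S := fun h => htnot ⟨htS, h⟩
    refine ⟨m + n - t, ⟨by simpa using htm, ?_⟩, by ring⟩
    simpa [show m + n - t - n = m - t by ring] using hmt
end

section
/- Let S be a symmetric numerical semigroup with Frobenius number F(S), n a positive integer, and m ≥ 2c − 1. Then D(m+n) \ D(m) = (Ap(S,n) + m − F(S)), the translate of the Apéry set by m − F(S). -/
theorem stmt_9 (S : Set ℤ) (hS : IsNumSgp S) (F : ℤ)
    (hF : F ∉ S ∧ ∀ x, F < x → x ∈ S)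
    (hsym : ∀ r : ℤ, r ∈ S ↔ F - r ∉ S)
    (n : ℤ) (hn : 0 < n) (m : ℤ) (hm : 2 * (F + 1) - 1 ≤ m) :
    divs S (m + n) \ divs S m = (fun s => s + m - F) '' Ap S n := by
  obtain ⟨-, -, hadd, -⟩ := hS
  ext t
  simp only [Set.mem_diff, Set.mem_image, divs, Ap, Set.mem_setOf_eq]
  constructor
  · rintro ⟨⟨ht, htn⟩, hnot⟩
    have hmt : m - t ∉ S := fun h => hnot ⟨ht, h⟩
    refine ⟨t - m + F, ⟨?_, ?_⟩, by ring⟩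
    · have := (hsym (t - m + F)).mpr
      apply this
      have : F - (t - m + F) = m - t := by ring
      rw [this]; exact hmt
    · intro h
      have h2 := (hsym (m + n - t)).mp htn
      have : F - (m + n - t) = t - m + F - n := by ring
      rw [this] at h2
      exact h2 h
  · rintro ⟨s, ⟨hs, hsn⟩, rfl⟩
    have hmF : m - F ∈ S := hF.2 _ (by linarith)
    constructor
    · constructor
      · have : s + m - F = s + (m - F) := by ring
        rw [this]; exact hadd s hs _ hmF
      · have h2 : F - (s - n) ∈ S := by
          rw [hsym]
          have : F - (F - (s - n)) = s - n := by ring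
          rw [this]; exact hsn
        have : m + n - (s + m - F) = F - (s - n) := by ring
        rw [this]; exact h2
    · rintro ⟨-, h⟩
      have : m - (s + m - F) = F - s := by ring
      rw [this] at h
      exact (hsym s).mp hs h
end

section
/- Let a < b be coprime integers greater than 2, S = ⟨a,b⟩, m ≥ 2c − 1, and i, h ∈ {0,…,b−1} such that L = {m ⊕ i, m ⊕ (i+1), …, m ⊕ (i+h)} is an amenable interval (in particular ia mod b < a). Then D(m ⊕ i + ha) ∩ [m, m+b) = L. -/
lemma gen2_mem (a b x y : ℤ) (hx : 0 ≤ x) (hy : 0 ≤ y) : x * a + y * b ∈ gen2 a b :=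
  ⟨x.toNat, y.toNat, by rw [Int.toNat_of_nonneg hx, Int.toNat_of_nonneg hy]⟩

lemma emod_eq_of (b X u : ℤ) (hd : b ∣ X - u) (h0 : 0 ≤ u) (h1 : u < b) : X % b = u := by
  obtain ⟨k, hk⟩ := hd
  have hX : X = u + b * k := by linarith
  rw [hX, Int.add_mul_emod_self_left, Int.emod_eq_of_lt h0 h1]

lemma rep_iff (a b : ℤ) (ha : 0 < a) (hb : 0 < b) (hcop : IsCoprime a b) (n p : ℤ)
    (hp : 0 ≤ p) (hpb : p < b) (hd : b ∣ n - p * a) : n ∈ gen2 a b ↔ p * a ≤ n := by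
  constructor
  · rintro ⟨x, y, rfl⟩
    have hx0 : (0:ℤ) ≤ (x:ℤ) := Int.natCast_nonneg x
    have hy0 : (0:ℤ) ≤ (y:ℤ) := Int.natCast_nonneg y
    have hdvd : b ∣ ((x:ℤ) - p) * a := by
      have : ((x:ℤ) - p) * a = ((x:ℤ) * a + (y:ℤ) * b - p * a) - y * b := by ring
      rw [this]
      exact dvd_sub hd ⟨y, by ring⟩
    obtain ⟨k, hk⟩ := (hcop.symm).dvd_of_dvd_mul_right hdvd
    have hk0 : 0 ≤ k := by nlinarith
    have hpx : p ≤ (x:ℤ) := by nlinarith [mul_nonneg hb.le hk0]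
    nlinarith [mul_le_mul_of_nonneg_right hpx ha.le, mul_nonneg hy0 hb.le]
  · intro hle
    obtain ⟨k, hk⟩ := hd
    have hk0 : 0 ≤ k := by nlinarith
    have : n = p * a + k * b := by linarith
    rw [this]; exact gen2_mem a b p k hp hk0

lemma mem_of_big (a b : ℤ) (ha : 0 < a) (hb : 0 < b) (hcop : IsCoprime a b) (n : ℤ)
    (hn : (a - 1) * (b - 1) ≤ n) : n ∈ gen2 a b := by
  obtain ⟨e, f, hef⟩ := hcop
  set p := (n * e) % b with hp
  have hp0 : 0 ≤ p := Int.emod_nonneg _ (by omega)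
  have hpb : p < b := Int.emod_lt_of_pos _ hb
  have hd1 : b ∣ n * e - p := Int.dvd_self_sub_of_emod_eq rfl
  have hd : b ∣ n - p * a := by
    have : n - p * a = (n * e - p) * a + n * f * b := by
      have h1 : e * a = 1 - f * b := by linarith
      calc n - p * a = n * (e * a) - p * a + n * f * b - n * (e*a) - n*f*b + n := by ring
        _ = (n * e - p) * a + n * f * b + (n - n * (e*a) - n * f * b) := by ring
        _ = (n * e - p) * a + n * f * b := by rw [h1]; ring
    rw [this]
    exact dvd_add (hd1.mul_right a) ⟨n * f, by ring⟩
  rw [rep_iff a b ha hb ⟨e, f, hef⟩ n p hp0 hpb hd]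
  obtain ⟨k, hk⟩ := hd
  have hk0 : 0 ≤ k := by nlinarith
  nlinarith

theorem stmt_12 (a b : ℤ) (ha : 2 < a) (hab : a < b) (hcop : IsCoprime a b)
    (m : ℤ) (hm : 2 * (a * b - a - b + 1) - 1 ≤ m)
    (i h : ℤ) (hi0 : 0 ≤ i) (hib : i ≤ b - 1) (hh0 : 0 ≤ h) (hhb : h ≤ b - 1)
    (L : Set ℤ) (hL : L = (fun j => m + (j * a) % b) '' Set.Icc i (i + h))
    (hamen : ∀ x ∈ L, divs (gen2 a b) x ∩ Set.Ici m ⊆ L)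
    (hlow : (i * a) % b < a) :
    divs (gen2 a b) (m + (i * a) % b + h * a) ∩ Set.Ico m (m + b) = L := by
  have ha0 : 0 < a := by omega
  have hb0 : 0 < b := by omega
  set r := (i * a) % b with hr
  have hr0 : 0 ≤ r := Int.emod_nonneg _ (by omega)
  have hrb : r < b := Int.emod_lt_of_pos _ hb0
  have hdr : b ∣ i * a - r := Int.dvd_self_sub_of_emod_eq rfl
  have hbig : (a - 1) * (b - 1) ≤ m := by nlinarith
  subst hL
  ext d
  simp only [Set.mem_inter_iff, Set.mem_Ico, Set.mem_image, Set.mem_Icc, divs,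
    Set.mem_setOf_eq]
  constructor
  · rintro ⟨⟨hdS, hxdS⟩, hdm, hdb⟩
    obtain ⟨e, f, hef⟩ := hcop
    set t := ((d - m - r) * e) % b with htdef
    have ht0 : 0 ≤ t := Int.emod_nonneg _ (by omega)
    have htb : t < b := Int.emod_lt_of_pos _ hb0
    have hd1 : b ∣ (d - m - r) * e - t := Int.dvd_self_sub_of_emod_eq rfl
    -- b ∣ t * a - (d - m - r)
    have hkey : b ∣ t * a - (d - m - r) := by
      have heq : t * a - (d - m - r) =
          -(((d - m - r) * e - t) * a) + (-(d - m - r) * f) * b := by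
        have h1 : e * a = 1 - f * b := by linarith
        calc t * a - (d - m - r)
            = -(((d - m - r) * e - t) * a) + (d - m - r) * (e * a) - (d - m - r) := by ring
          _ = -(((d - m - r) * e - t) * a) + (d - m - r) * (1 - f * b) - (d - m - r) := by
              rw [h1]
          _ = -(((d - m - r) * e - t) * a) + (-(d - m - r) * f) * b := by ring
      rw [heq]
      exact dvd_add (dvd_neg.mpr (hd1.mul_right a)) ⟨-(d - m - r) * f, by ring⟩
    have hth : t ≤ h := by
      by_contra hc
      push_neg at hc
      set p := h - t + b with hpdef
      have hp0 : 0 ≤ p := by omega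
      have hpb : p < b := by omega
      have hdx : b ∣ (m + r + h * a - d) - p * a := by
        obtain ⟨k, hk⟩ := hkey
        refine ⟨k - a, ?_⟩
        rw [hpdef]
        linear_combination hk
      have hle := (rep_iff a b ha0 hb0 ⟨e, f, hef⟩ _ p hp0 hpb hdx).mp hxdS
      -- p * a ≤ m + r + h*a - d,  d ≥ m  ⇒ (b - t) * a ≤ r < a
      have h2 : (b - t) * a ≤ r := by nlinarith
      nlinarith
    refine ⟨i + t, ⟨by omega, by omega⟩, ?_⟩
    have : ((i + t) * a) % b = d - m := by
      apply emod_eq_of b _ _ _ (by omega) (by omega)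
      obtain ⟨k1, hk1⟩ := hdr
      obtain ⟨k2, hk2⟩ := hkey
      exact ⟨k1 + k2, by linear_combination hk1 + hk2⟩
    show m + ((i + t) * a) % b = d
    rw [this]; ring
  · rintro ⟨j, ⟨hij, hjh⟩, rfl⟩
    set s := (j * a) % b with hs
    have hs0 : 0 ≤ s := Int.emod_nonneg _ (by omega)
    have hsb : s < b := Int.emod_lt_of_pos _ hb0
    have hds : b ∣ j * a - s := Int.dvd_self_sub_of_emod_eq rfl
    set t := j - i with htdef
    have ht0 : 0 ≤ t := by omega
    have hth : t ≤ h := by omega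
    have hdd : b ∣ r + t * a - s := by
      obtain ⟨k1, hk1⟩ := hdr
      obtain ⟨k2, hk2⟩ := hds
      refine ⟨k2 - k1, ?_⟩
      have : j * a = i * a + t * a := by rw [htdef]; ring
      rw [this] at hk2
      linarith
    obtain ⟨k, hk⟩ := hdd
    have hk0 : 0 ≤ k := by nlinarith
    refine ⟨⟨?_, ?_⟩, by omega, by omega⟩
    · exact mem_of_big a b ha0 hb0 hcop _ (by nlinarith)
    · have hxd : m + r + h * a - (m + s) = (h - t) * a + k * b := by
        have : r + t * a - s = b * k := hk
        linarith [this]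
      rw [hxd]
      exact gen2_mem a b (h - t) k (by omega) hk0
end

section
/- Let a < b be coprime integers greater than 2, S = ⟨a,b⟩, m ≥ 2c − 1, and n, n′ ∈ ℕ such that D(m+n) ∩ [m, m+b) ≠ {m, m+1, …, m+b−1}. Then n − n′ ∈ S if and only if D(m+n′) ∩ [m, m+b) ⊆ D(m+n) ∩ [m, m+b). -/
lemma gen2_add_s13 {a b x y : ℤ} (hx : x ∈ gen2 a b) (hy : y ∈ gen2 a b) : x + y ∈ gen2 a b := by
  obtain ⟨p, q, rfl⟩ := hx
  obtain ⟨r, s, rfl⟩ := hy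
  exact ⟨p + r, q + s, by push_cast; ring⟩

lemma mem_gen2_s13 {a b i x : ℤ} (hb : 0 < b) (hi0 : 0 ≤ i) (h : i * a ≤ x)
    (hd : b ∣ x - i * a) : x ∈ gen2 a b := by
  obtain ⟨k, hk⟩ := hd
  have hk0 : 0 ≤ k := by nlinarith
  refine ⟨i.toNat, k.toNat, ?_⟩
  rw [Int.toNat_of_nonneg hi0, Int.toNat_of_nonneg hk0]
  linear_combination hk

lemma gen2_le {a b i x : ℤ} (hcop : IsCoprime a b) (ha : 0 < a) (hb : 0 < b)
    (hi0 : 0 ≤ i) (hi1 : i < b) (hd : b ∣ x - i * a) (hx : x ∈ gen2 a b) : i * a ≤ x := by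
  obtain ⟨p, q, hpq⟩ := hx
  have hp0 : (0:ℤ) ≤ p := Int.natCast_nonneg p
  have hq0 : (0:ℤ) ≤ q := Int.natCast_nonneg q
  set i' : ℤ := (p : ℤ) % b with hi'
  have h0' : 0 ≤ i' := Int.emod_nonneg _ hb.ne'
  have h1' : i' < b := Int.emod_lt_of_pos _ hb
  have hpi : (p:ℤ) - i' = b * ((p:ℤ) / b) := by
    linarith [Int.emod_add_mul_ediv (p:ℤ) b]
  have hpd0 : 0 ≤ (p:ℤ)/b := Int.ediv_nonneg hp0 hb.le
  have hdvd' : b ∣ x - i' * a := ⟨((p:ℤ)/b) * a + q, by linear_combination hpq + a * hpi⟩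
  have hii : b ∣ (i' - i) * a := by
    obtain ⟨k1, hk1⟩ := hd
    obtain ⟨k2, hk2⟩ := hdvd'
    exact ⟨k1 - k2, by linear_combination hk1 - hk2⟩
  have hii' : b ∣ i' - i := (hcop.symm.dvd_of_dvd_mul_right) hii
  have : i' = i := by
    obtain ⟨k, hk⟩ := hii'
    have hk00 : k = 0 := by nlinarith
    rw [hk00, mul_zero] at hk
    linarith
  rw [← this]
  have h2 : i' ≤ (p:ℤ) := by nlinarith
  nlinarith

lemma gen2_conductor {a b x : ℤ} (hcop : IsCoprime a b) (ha : 0 < a) (hb : 0 < b)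
    (hx : a * b - a - b + 1 ≤ x) : x ∈ gen2 a b := by
  obtain ⟨u, v, huv⟩ := hcop
  set i := (x * u) % b with hi
  have hi0 : 0 ≤ i := Int.emod_nonneg _ hb.ne'
  have hi1 : i < b := Int.emod_lt_of_pos _ hb
  have h1 : x * u - i = b * (x * u / b) := by
    linarith [Int.emod_add_mul_ediv (x * u) b]
  have hdvd : b ∣ x - i * a := ⟨(x * u / b) * a + x * v, by linear_combination a * h1 - x * huv⟩
  obtain ⟨k, hk⟩ := hdvd
  have hlb : 1 - b ≤ b * k := by nlinarith
  have hk0 : 0 ≤ k := by nlinarith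
  exact mem_gen2_s13 hb hi0 (by nlinarith) ⟨k, hk⟩

theorem stmt_13 (a b : ℤ) (ha : 2 < a) (hab : a < b) (hcop : IsCoprime a b)
    (m : ℤ) (hm : 2 * (a * b - a - b + 1) - 1 ≤ m)
    (n n' : ℤ) (hn : 0 ≤ n) (hn' : 0 ≤ n')
    (hne : divs (gen2 a b) (m + n) ∩ Set.Ico m (m + b) ≠ Set.Ico m (m + b)) :
    n - n' ∈ gen2 a b ↔
      divs (gen2 a b) (m + n') ∩ Set.Ico m (m + b) ⊆
        divs (gen2 a b) (m + n) ∩ Set.Ico m (m + b) := by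
  have ha0 : (0:ℤ) < a := by linarith
  have hb : (0:ℤ) < b := by linarith
  have hc1 : (1:ℤ) ≤ a * b - a - b + 1 := by nlinarith
  have hmc : a * b - a - b + 1 ≤ m := by linarith
  have htS : ∀ t : ℤ, m ≤ t → t ∈ gen2 a b := fun t ht =>
    gen2_conductor hcop ha0 hb (le_trans hmc ht)
  constructor
  · rintro hnn t ⟨⟨htS', htd⟩, hti⟩
    refine ⟨⟨htS', ?_⟩, hti⟩
    have := gen2_add_s13 hnn htd
    have e1 : n - n' + (m + n' - t) = m + n - t := by ring
    rwa [e1] at this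
  · intro H
    have hnlt : n < (b - 1) * a := by
      by_contra hge
      push_neg at hge
      apply hne
      refine Set.Subset.antisymm Set.inter_subset_right ?_
      rintro t ⟨ht1, ht2⟩
      exact ⟨⟨htS t ht1, gen2_conductor hcop ha0 hb (by nlinarith)⟩, ht1, ht2⟩
    obtain ⟨u, v, huv⟩ := id hcop
    set d := ((n - n') * u) % b with hd_def
    have hd0 : 0 ≤ d := Int.emod_nonneg _ hb.ne'
    have hd1 : d < b := Int.emod_lt_of_pos _ hb
    have h1 : (n - n') * u - d = b * ((n - n') * u / b) := by
      linarith [Int.emod_add_mul_ediv ((n - n') * u) b]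
    have hdvd : b ∣ (n - n') - d * a :=
      ⟨((n - n') * u / b) * a + (n - n') * v, by linear_combination a * h1 - (n - n') * huv⟩
    refine mem_gen2_s13 hb hd0 ?_ hdvd
    by_contra hlt
    push_neg at hlt
    obtain ⟨k, hk⟩ := hdvd
    have hkneg : k < 0 := by nlinarith
    have hle : n - n' ≤ d * a - b := by nlinarith
    -- key lemma
    have key : ∀ i j : ℤ, 0 ≤ i → i * a ≤ n' → 0 ≤ j → j < b →
        b ∣ (n - n' + i * a) - j * a → j * a ≤ n := by
      intro i j hi0 hia hj0 hj1 hcong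
      set r := (n' - i * a) % b with hr
      have hr0 : 0 ≤ r := Int.emod_nonneg _ hb.ne'
      have hr1 : r < b := Int.emod_lt_of_pos _ hb
      have hrd : (n' - i * a) - r = b * ((n' - i * a) / b) := by
        linarith [Int.emod_add_mul_ediv (n' - i * a) b]
      have hq0 : 0 ≤ (n' - i * a) / b := Int.ediv_nonneg (by linarith) hb.le
      have hbq : 0 ≤ b * ((n' - i * a) / b) := mul_nonneg hb.le hq0
      have hmem : m + r ∈ divs (gen2 a b) (m + n') ∩ Set.Ico m (m + b) := by
        refine ⟨⟨htS _ (by linarith), ?_⟩, by linarith, by linarith⟩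
        have e1 : m + n' - (m + r) = n' - r := by ring
        rw [e1]
        exact mem_gen2_s13 hb hi0 (by linarith) ⟨(n' - i * a) / b, by linarith⟩
      obtain ⟨⟨_, hmn⟩, _⟩ := H hmem
      obtain ⟨k1, hk1⟩ := hcong
      have hdd : b ∣ (m + n - (m + r)) - j * a :=
        ⟨k1 + (n' - i * a) / b, by linear_combination hk1 + hrd⟩
      have := gen2_le hcop ha0 hb hj0 hj1 hdd hmn
      linarith
    set e := min (b - 1) (n' / a) with he_def
    have he0 : 0 ≤ e := le_min (by linarith) (Int.ediv_nonneg hn' ha0.le)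
    have heb : e ≤ b - 1 := min_le_left _ _
    have hea : e * a ≤ n' := by
      have h1 : e ≤ n' / a := min_le_right _ _
      have h2 := Int.emod_add_mul_ediv n' a
      have h3 := Int.emod_nonneg n' ha0.ne'
      have h4 := mul_le_mul_of_nonneg_right h1 ha0.le
      have h5 : n' / a * a = a * (n' / a) := mul_comm _ _
      linarith
    rcases le_or_gt (e + d) (b - 1) with hcase | hcase
    · have h1 : (e + d) * a ≤ n :=
        key e (e + d) he0 hea (by linarith) (by linarith) ⟨k, by linear_combination hk⟩
      have h2 : (e + 1) * a ≤ n' := by nlinarith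
      have h3 : e + 1 ≤ n' / a := by
        rw [Int.le_ediv_iff_mul_le ha0]
        exact h2
      have h4 : e = b - 1 := by omega
      have h5 : d = 0 := by omega
      have h6 : (e + d) * a = (b - 1) * a := by rw [h4, h5]; ring
      linarith
    · have hi0 : (0:ℤ) ≤ b - 1 - d := by linarith
      have hia : (b - 1 - d) * a ≤ n' := by
        have : (b - 1 - d) * a ≤ e * a :=
          mul_le_mul_of_nonneg_right (by linarith) ha0.le
        linarith
      have h1 : (b - 1) * a ≤ n :=
        key (b - 1 - d) (b - 1) hi0 hia (by linarith) (by linarith)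
          ⟨k, by linear_combination hk⟩
      linarith
end

section
/- Let S be a numerical semigroup, m ≥ 2c − 1, and n ≤ n′ natural numbers. Then #(D(m+n) ∩ [m,∞)) ≤ #(D(m+n′) ∩ [m,∞)). -/
theorem stmt_14 (S : Set ℤ) (hS : IsNumSgp S) (c : ℤ) (hc : IsConductor S c)
    (m : ℤ) (hm : 2 * c - 1 ≤ m) (n n' : ℤ) (hn : 0 ≤ n) (hnn' : n ≤ n') :
    (divs S (m + n) ∩ Set.Ici m).ncard ≤ (divs S (m + n') ∩ Set.Ici m).ncard := by
  -- conductor is nonnegative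
  have hc0 : 0 ≤ c := by
    by_contra h
    push_neg at h
    have : (-1 : ℤ) ∈ S := hc.1 (-1) (by omega)
    have := hS.2.1 _ this
    omega
  have hBfin : (divs S (m + n') ∩ Set.Ici m).Finite := by
    apply (Set.finite_Icc m (m + n')).subset
    rintro s ⟨⟨_, h2⟩, h3⟩
    have := hS.2.1 _ h2
    exact ⟨h3, by omega⟩
  have himg : (fun x => x + (n' - n)) '' (divs S (m + n) ∩ Set.Ici m)
      ⊆ divs S (m + n') ∩ Set.Ici m := by
    rintro _ ⟨s, ⟨⟨hs1, hs2⟩, hs3⟩, rfl⟩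
    show s + (n' - n) ∈ divs S (m + n') ∩ Set.Ici m
    have hsnn : 0 ≤ s := hS.2.1 _ hs1
    have hsm : m ≤ s := hs3
    refine ⟨⟨hc.1 _ (by omega), ?_⟩, ?_⟩
    · have : m + n' - (s + (n' - n)) = m + n - s := by ring
      rw [this]; exact hs2
    · simp only [Set.mem_Ici]; omega
  calc (divs S (m + n) ∩ Set.Ici m).ncard
      = ((fun x => x + (n' - n)) '' (divs S (m + n) ∩ Set.Ici m)).ncard := by
        rw [Set.ncard_image_of_injective _ (add_left_injective _)]
    _ ≤ (divs S (m + n') ∩ Set.Ici m).ncard := Set.ncard_le_ncard himg hBfin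
end

section
/- Let S be a numerical semigroup with conductor c, enumerate S = {ρ₁ = 0 < ρ₂ < ⋯}, and let m ≥ 2c − 1. For all t ≥ r ≥ 1, #(D(m + ρₜ) ∩ [0, m)) ≥ #(D(m + ρᵣ) ∩ [0, m)). -/
theorem stmt_15 (S : Set ℤ) (hS : IsNumSgp S) (c : ℤ) (hc : IsConductor S c)
    (ρ : ℕ → ℤ) (hρ1 : ρ 1 = 0)
    (hmono : ∀ i j, 1 ≤ i → i < j → ρ i < ρ j)
    (hrange : S = {x | ∃ k, 1 ≤ k ∧ ρ k = x})
    (m : ℤ) (hm : 2 * c - 1 ≤ m) (r t : ℕ) (hr : 1 ≤ r) (hrt : r ≤ t) :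
    (divs S (m + ρ r) ∩ Set.Ico 0 m).ncard ≤
      (divs S (m + ρ t) ∩ Set.Ico 0 m).ncard := by
  obtain ⟨h0, hpos, hadd, hfin⟩ := hS
  obtain ⟨hc1, hc2⟩ := hc
  have hmem : ∀ k, 1 ≤ k → ρ k ∈ S := fun k hk => by
    rw [hrange]; exact ⟨k, hk, rfl⟩
  have hρr : ρ r ∈ S := hmem r hr
  have hρt : ρ t ∈ S := hmem t (hr.trans hrt)
  have hle : ρ r ≤ ρ t := by
    rcases eq_or_lt_of_le hrt with h | h
    · rw [h]
    · exact (hmono r t hr h).le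
  have hgaplt : ∀ g : ℤ, 0 ≤ g → g ∉ S → g < c := by
    intro g hg hgS
    by_contra h
    exact hgS (hc1 g (by omega))
  have key : ∀ ρ0 ∈ S, (divs S (m + ρ0) ∩ Set.Ico 0 m).ncard
      + {g : ℤ | 0 ≤ g ∧ g ∉ S ∧ ρ0 < g}.ncard = (S ∩ Set.Ico 0 m).ncard := by
    intro ρ0 hρ0
    have hρ0nn : 0 ≤ ρ0 := hpos _ hρ0
    set B := S ∩ Set.Ico 0 m with hB
    set A := divs S (m + ρ0) ∩ Set.Ico 0 m with hA
    set G := {g : ℤ | 0 ≤ g ∧ g ∉ S ∧ ρ0 < g} with hG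
    have hBfin : B.Finite := (Set.finite_Ico 0 m).subset Set.inter_subset_right
    have hAB : A ⊆ B := fun s hs => ⟨hs.1.1, hs.2⟩
    have himg : (fun g => m + ρ0 - g) '' G = B \ A := by
      ext s
      constructor
      · rintro ⟨g, ⟨hg0, hgS, hgρ⟩, rfl⟩
        have hglt : g < c := hgaplt g hg0 hgS
        have hsS : m + ρ0 - g ∈ S := hc1 _ (by omega)
        refine ⟨⟨hsS, ⟨(by show (0:ℤ) ≤ m + ρ0 - g; omega), (by show m + ρ0 - g < m; omega)⟩⟩, ?_⟩
        rintro ⟨⟨-, hdiv⟩, -⟩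
        have heq : m + ρ0 - (m + ρ0 - g) = g := by ring
        rw [heq] at hdiv
        exact hgS hdiv
      · rintro ⟨⟨hsS, h0s, hsm⟩, hsA⟩
        have hgS : m + ρ0 - s ∉ S := fun h => hsA ⟨⟨hsS, h⟩, h0s, hsm⟩
        exact ⟨m + ρ0 - s, ⟨by omega, hgS, by omega⟩, by ring⟩
    have hGfin : G.Finite := hfin.subset (fun g hg => ⟨hg.1, hg.2.1⟩)
    have h1 : (B \ A).ncard = G.ncard := by
      rw [← himg, Set.ncard_image_of_injective _ sub_right_injective]
    have h2 : (B \ A).ncard = B.ncard - A.ncard := Set.ncard_diff hAB (hBfin.subset hAB)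
    have h3 : A.ncard ≤ B.ncard := Set.ncard_le_ncard hAB hBfin
    omega
  have hkr := key (ρ r) hρr
  have hkt := key (ρ t) hρt
  have hGsub : {g : ℤ | 0 ≤ g ∧ g ∉ S ∧ ρ t < g} ⊆ {g : ℤ | 0 ≤ g ∧ g ∉ S ∧ ρ r < g} :=
    fun g hg => ⟨hg.1, hg.2.1, lt_of_le_of_lt hle hg.2.2⟩
  have hGrfin : {g : ℤ | 0 ≤ g ∧ g ∉ S ∧ ρ r < g}.Finite :=
    hfin.subset (fun g hg => ⟨hg.1, hg.2.1⟩)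
  have hG : {g : ℤ | 0 ≤ g ∧ g ∉ S ∧ ρ t < g}.ncard
      ≤ {g : ℤ | 0 ≤ g ∧ g ∉ S ∧ ρ r < g}.ncard :=
    Set.ncard_le_ncard hGsub hGrfin
  omega
end

section
/- Let S be a numerical semigroup with genus g and conductor c, m ≥ 2c − 1, and enumerate S = {ρ₁ = 0 < ρ₂ < ⋯}. Then for every r ≥ 1, #D(m + ρᵣ) = m + 1 − 2g + ρᵣ, and moreover ρₜ − ρᵣ ≥ t − r for all t ≥ r. -/
theorem stmt_16 (S : Set ℤ) (hS : IsNumSgp S) (c : ℤ) (hc : IsConductor S c)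
    (ρ : ℕ → ℤ) (hρ1 : ρ 1 = 0)
    (hmono : ∀ i j, 1 ≤ i → i < j → ρ i < ρ j)
    (hrange : S = {x | ∃ k, 1 ≤ k ∧ ρ k = x})
    (m : ℤ) (hm : 2 * c - 1 ≤ m) :
    (∀ r : ℕ, 1 ≤ r →
      ((divs S (m + ρ r)).ncard : ℤ) = m + 1 - 2 * (genus S : ℤ) + ρ r) ∧
    (∀ r t : ℕ, 1 ≤ r → r ≤ t → (t : ℤ) - (r : ℤ) ≤ ρ t - ρ r) := by
  obtain ⟨h0, hnn, hadd, hfin⟩ := hS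
  obtain ⟨hc1, hc2⟩ := hc
  have hc0 : 0 ≤ c := by
    by_contra h
    push_neg at h
    have : (-1 : ℤ) ∈ S := hc1 (-1) (by omega)
    have := hnn _ this; omega
  have hgap : ∀ y ∈ {x : ℤ | 0 ≤ x ∧ x ∉ S}, y ≤ c - 1 := by
    intro y hy
    by_contra h
    exact hy.2 (hc1 y (by omega))
  constructor
  · intro r hr
    have hρS : ρ r ∈ S := by rw [hrange]; exact ⟨r, hr, rfl⟩
    have hρ0 : 0 ≤ ρ r := hnn _ hρS
    set x := m + ρ r with hx
    have hxge : 2 * c - 1 ≤ x := by omega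
    set G := {x : ℤ | 0 ≤ x ∧ x ∉ S} with hG
    have hGsub : G ⊆ Set.Icc 0 x := fun y hy => ⟨hy.1, by have := hgap y hy; omega⟩
    have hIsub : (fun y => x - y) '' G ⊆ Set.Icc 0 x := by
      rintro _ ⟨y, hy, rfl⟩
      have h1 := hgap y hy
      have h2 := hy.1
      show x - y ∈ Set.Icc 0 x
      exact ⟨by omega, by omega⟩
    have hDsub : divs S x ⊆ Set.Icc 0 x := by
      rintro s ⟨hs, hxs⟩
      have h1 := hnn _ hs; have h2 := hnn _ hxs
      exact ⟨by omega, by omega⟩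
    have hunion : Set.Icc 0 x = divs S x ∪ (G ∪ (fun y => x - y) '' G) := by
      ext s
      constructor
      · rintro ⟨h1, h2⟩
        by_cases hsS : s ∈ S
        · by_cases hxsS : x - s ∈ S
          · exact Or.inl ⟨hsS, hxsS⟩
          · exact Or.inr (Or.inr ⟨x - s, ⟨by omega, hxsS⟩, by ring⟩)
        · exact Or.inr (Or.inl ⟨h1, hsS⟩)
      · rintro (h | h | h)
        · exact hDsub h
        · exact hGsub h
        · exact hIsub h
    have hd1 : Disjoint (divs S x) (G ∪ (fun y => x - y) '' G) := by
      rw [Set.disjoint_left]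
      rintro s ⟨hs, hxs⟩ (h | ⟨y, hy, rfl⟩)
      · exact h.2 hs
      · have heq : x - (x - y) = y := by ring
        exact hy.2 (heq ▸ hxs)
    have hd2 : Disjoint G ((fun y => x - y) '' G) := by
      rw [Set.disjoint_left]
      rintro s hs ⟨y, hy, rfl⟩
      have h1 : x - y ≤ c - 1 := hgap _ hs
      have h2 := hgap _ hy
      have h3 := hy.1
      omega
    have hGfin : G.Finite := hfin
    have hIfin : ((fun y => x - y) '' G).Finite := hGfin.image _
    have hDfin : (divs S x).Finite := (Set.finite_Icc 0 x).subset hDsub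
    have hIcard : ((fun y => x - y) '' G).ncard = G.ncard :=
      Set.ncard_image_of_injective G (fun a b hab => by simpa using hab)
    have hIcc : (Set.Icc (0:ℤ) x).ncard = (x + 1).toNat := by
      rw [← Finset.coe_Icc, Set.ncard_coe_finset, Int.card_Icc]
      simp
    have hsum : (Set.Icc (0:ℤ) x).ncard
        = (divs S x).ncard + (G.ncard + G.ncard) := by
      rw [hunion, Set.ncard_union_eq hd1 hDfin (hGfin.union hIfin),
        Set.ncard_union_eq hd2 hGfin hIfin, hIcard]
    have hgen : genus S = G.ncard := rfl
    have hxm1 : (-1 : ℤ) ≤ x := by omega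
    have hcast : ((x + 1).toNat : ℤ) = x + 1 := by omega
    rw [hIcc] at hsum
    rw [hgen]
    omega
  · intro r t hr hrt
    induction t, hrt using Nat.le_induction with
    | base => simp
    | succ n hn ih =>
      have := hmono n (n + 1) (le_trans hr hn) (by omega)
      push_cast
      omega
end

section
/- Let S be a numerical semigroup minimally generated by n₁ < ⋯ < n_e with conductor c, m ≥ 2c − 1, and M = {m = m₁ < ⋯ < m_r} ⊆ S a set that is m-closed under division (for each i, D(mᵢ) ∩ [m,∞) ⊆ M). Let L = M ∩ [m, m + n_e). Then #D(M) = #(D(L) ∩ [0,m)) + #M, where D(M) = ⋃_{x∈M} D(x). -/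
lemma decomp (A : Finset ℤ) (t : ℤ) (ht : t ∈ AddSubmonoid.closure (A : Set ℤ)) :
    t = 0 ∨ ∃ g ∈ A, t - g ∈ AddSubmonoid.closure (A : Set ℤ) := by
  induction ht using AddSubmonoid.closure_induction with
  | mem x hx => exact Or.inr ⟨x, hx, by simpa using zero_mem _⟩
  | zero => exact Or.inl rfl
  | add x y hx hy ihx ihy =>
      rcases ihx with h | ⟨g, hg, hgm⟩
      · subst h; simpa using ihy
      · exact Or.inr ⟨g, hg, by rw [show x + y - g = (x - g) + y by ring]; exact add_mem hgm hy⟩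

theorem stmt_17 (S : Set ℤ) (hS : IsNumSgp S) (c : ℤ) (hc : IsConductor S c)
    (A : Finset ℤ) (hAne : A.Nonempty)
    (hgen : S = {x : ℤ | x ∈ AddSubmonoid.closure (A : Set ℤ)})
    (hmin : ∀ B : Finset ℤ, B ⊂ A → S ≠ {x : ℤ | x ∈ AddSubmonoid.closure (B : Set ℤ)})
    (ne : ℤ) (hne : ne = A.max' hAne)
    (m : ℤ) (hm : 2 * c - 1 ≤ m)
    (M : Finset ℤ) (hMS : (M : Set ℤ) ⊆ S) (hmM : m ∈ M)
    (hMge : ∀ x ∈ M, m ≤ x)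
    (hclosed : ∀ x ∈ M, divs S x ∩ Set.Ici m ⊆ (M : Set ℤ))
    (L : Set ℤ) (hL : L = (M : Set ℤ) ∩ Set.Ico m (m + ne)) :
    (⋃ x ∈ (M : Set ℤ), divs S x).ncard =
      ((⋃ x ∈ L, divs S x) ∩ Set.Ico 0 m).ncard + M.card := by
  obtain ⟨h0S, hSnn, hSadd, -⟩ := hS
  have hAS : (A : Set ℤ) ⊆ S := by
    intro a ha
    rw [hgen]; exact AddSubmonoid.subset_closure ha
  have hApos : ∀ a ∈ A, 0 < a := by
    intro a ha
    rcases lt_or_eq_of_le (hSnn a (hAS ha)) with h | h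
    · exact h
    · exfalso
      apply hmin (A.erase 0) (Finset.erase_ssubset (h ▸ ha))
      rw [hgen]
      have : AddSubmonoid.closure ((A.erase 0 : Finset ℤ) : Set ℤ)
          = AddSubmonoid.closure (A : Set ℤ) := by
        apply le_antisymm
        · exact AddSubmonoid.closure_mono (by simp [Finset.coe_subset, Finset.erase_subset])
        · rw [AddSubmonoid.closure_le]
          intro b hb
          rcases eq_or_ne b 0 with hb0 | hb0
          · rw [hb0]; exact zero_mem _
          · exact AddSubmonoid.subset_closure (by simpa [Finset.mem_erase, hb0] using hb)
      rw [this]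
  have hnemem : ne ∈ A := hne ▸ A.max'_mem hAne
  have hnepos : 0 < ne := hApos ne hnemem
  have hgle : ∀ g ∈ A, g ≤ ne := fun g hg => hne ▸ A.le_max' g hg
  -- descent lemma
  have descent : ∀ k : ℕ, ∀ x ∈ M, ∀ s ∈ divs S x, s < m → (x - m).toNat ≤ k →
      ∃ ℓ ∈ L, s ∈ divs S ℓ := by
    intro k
    induction k with
    | zero =>
        intro x hx s hs hsm hk
        refine ⟨x, ?_, hs⟩
        have hxm : x = m := by
          have h1 := hMge x hx
          have h2 : x - m ≤ 0 := by
            by_contra h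
            push_neg at h
            omega
          omega
        rw [hL]
        exact ⟨hx, by rw [hxm]; constructor <;> omega⟩
    | succ k ih =>
        intro x hx s hs hsm hk
        by_cases hxb : x < m + ne
        · exact ⟨x, by rw [hL]; exact ⟨hx, hMge x hx, hxb⟩, hs⟩
        · push_neg at hxb
          obtain ⟨hsS, htS⟩ := hs
          have htcl : x - s ∈ AddSubmonoid.closure (A : Set ℤ) := by
            rw [hgen] at htS; exact htS
          rcases decomp A (x - s) htcl with h0 | ⟨g, hg, hgm⟩
          · omega
          · have hgpos := hApos g hg
            have hgne := hgle g hg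
            have hx'S : x - g - s ∈ S := by
              have h2 : x - s - g ∈ S := by rw [hgen]; exact hgm
              have he : x - g - s = x - s - g := by ring
              rw [he]; exact h2
            have hx'mem : x - g ∈ S := by
              have := hSadd s hsS (x - g - s) hx'S
              convert this using 1; ring
            have hx'M : x - g ∈ M := by
              have : x - g ∈ divs S x ∩ Set.Ici m := by
                refine ⟨⟨hx'mem, ?_⟩, ?_⟩
                · have : x - (x - g) = g := by ring
                  rw [this]; exact hAS hg
                · simp only [Set.mem_Ici]; omega
              exact hclosed x hx this
            have hsd : s ∈ divs S (x - g) := ⟨hsS, hx'S⟩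
            exact ih (x - g) hx'M s hsd hsm (by omega)
  -- M is contained in D(M)
  have hMsub : (M : Set ℤ) ⊆ ⋃ x ∈ (M : Set ℤ), divs S x := by
    intro x hx
    exact Set.mem_biUnion hx ⟨hMS hx, by simpa using h0S⟩
  -- the key set equality
  have hkey : (⋃ x ∈ (M : Set ℤ), divs S x)
      = ((⋃ x ∈ L, divs S x) ∩ Set.Ico 0 m) ∪ (M : Set ℤ) := by
    apply Set.Subset.antisymm
    · intro s hsmem
      simp only [Set.mem_iUnion, exists_prop] at hsmem
      obtain ⟨x, hx, hs⟩ := hsmem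
      rcases lt_or_ge s m with hlt | hge
      · left
        obtain ⟨ℓ, hℓ, hsℓ⟩ := descent (x - m).toNat x hx s hs hlt le_rfl
        exact ⟨Set.mem_biUnion hℓ hsℓ, hSnn s hs.1, hlt⟩
      · right
        exact hclosed x hx ⟨hs, hge⟩
    · rintro s (⟨hsU, hs0, hsm⟩ | hsM)
      · simp only [Set.mem_iUnion, exists_prop] at hsU ⊢
        obtain ⟨ℓ, hℓ, hsℓ⟩ := hsU
        have hℓM : ℓ ∈ M := by rw [hL] at hℓ; exact hℓ.1
        exact ⟨ℓ, hℓM, hsℓ⟩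
      · exact hMsub hsM
  -- finiteness of the left part
  have hLfin : ((⋃ x ∈ L, divs S x) ∩ Set.Ico 0 m).Finite :=
    (Set.finite_Ico 0 m).subset (Set.inter_subset_right)
  have hdisj : Disjoint ((⋃ x ∈ L, divs S x) ∩ Set.Ico 0 m) (M : Set ℤ) := by
    rw [Set.disjoint_left]
    rintro s ⟨-, -, hsm⟩ hsM
    exact absurd (hMge s hsM) (by omega)
  rw [hkey, Set.ncard_union_eq hdisj hLfin M.finite_toSet, Set.ncard_coe_finset]
end
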